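/- For every n ≥ 1, in the POMDP P'_n (defined in the context) with reachability objective Reach({Goal}), every finite-memory randomized observation-based strategy that is almost-sure winning from the initial state q_0 has memory of size at least p*_n = p_1·p_2⋯p_n; in particular its memory size is at least 2^n, while P'_n has 3 + (p_1 + … + p_n) states, a number polynomial in n. -/

import Mathlib

open scoped ENNReal

/-- A partially-observable Markov decision process (POMDP) with states `L`,
actions `A` and observations `O`: a probabilistic transition function and an
observation function (the observations partition the state space). -/
structure POMDP (L : Type) (A : Type) (O : Type) where
  δ : L → A → PMF L
  obs : L → O

namespace POMDP

variable {L A O : Type}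

/-- A (randomized) strategy: given the initial state and the history of
(action, state) steps played so far, it chooses a distribution on actions. -/
abbrev Strategy (L A : Type) := L → List (A × L) → PMF A

/-- The sequence of states visited along a finite prefix. -/
def statesOf (l : L) (h : List (A × L)) : List L := l :: h.map Prod.snd

/-- Auxiliary probability of a finite prefix, for a strategy `π` given as a
function of the remaining history. -/
noncomputable def prefProbAux (M : POMDP L A O) :
    (List (A × L) → PMF A) → L → List (A × L) → ℝ≥0∞
  | _, _, [] => 1
  | π, l, (a, l') :: h =>
      π [] a * M.δ l a l' * M.prefProbAux (fun h' => π ((a, l') :: h')) l' h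

/-- The probability, under strategy `α` from state `l`, that the play starts
with the finite prefix `h` of (action, state) steps. -/
noncomputable def prefProb (M : POMDP L A O) (α : Strategy L A) (l : L)
    (h : List (A × L)) : ℝ≥0∞ :=
  M.prefProbAux (α l) l h

/-- A prefix is consistent with `α` from `l` if it has positive probability. -/
def Consistent (M : POMDP L A O) (α : Strategy L A) (l : L) (h : List (A × L)) : Prop :=
  0 < M.prefProb α l h

/-- The probability, under strategy `α` from state `l`, that the length-`n`
prefix of the play satisfies the predicate `P`. -/
noncomputable def horizonProb (M : POMDP L A O) [Fintype L] [Fintype A]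
    (α : Strategy L A) (l : L) (n : ℕ) (P : List (A × L) → Prop) : ℝ≥0∞ :=
  ∑ f : Fin n → A × L,
    Set.indicator {g : Fin n → A × L | P (List.ofFn g)}
      (fun g => M.prefProb α l (List.ofFn g)) f

/-- `Pr_l^α(Reach(T))`: probability that the play visits a state of `T`
(as the increasing limit of the finite-horizon reachability probabilities). -/
noncomputable def reachProb (M : POMDP L A O) [Fintype L] [Fintype A]
    (α : Strategy L A) (l : L) (T : Set L) : ℝ≥0∞ :=
  ⨆ n, M.horizonProb α l n (fun h => ∃ s ∈ statesOf l h, s ∈ T)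

/-- `Pr_l^α(Safe(T))`: probability that all states of the play lie in `T`
(as the decreasing limit of the finite-horizon safety probabilities). -/
noncomputable def safeProb (M : POMDP L A O) [Fintype L] [Fintype A]
    (α : Strategy L A) (l : L) (T : Set L) : ℝ≥0∞ :=
  ⨅ n, M.horizonProb α l n (fun h => ∀ s ∈ statesOf l h, s ∈ T)

/-- `Pr_l^α(Until(T₁,T₂))`: probability that the play visits `T₂` at some
position `k` with all positions `≤ k` in `T₁`. -/
noncomputable def untilProb (M : POMDP L A O) [Fintype L] [Fintype A]
    (α : Strategy L A) (l : L) (T₁ T₂ : Set L) : ℝ≥0∞ :=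
  ⨆ n, M.horizonProb α l n (fun h => ∃ k, ∃ hk : k < (statesOf l h).length,
      (statesOf l h).get ⟨k, hk⟩ ∈ T₂ ∧
      ∀ j, ∀ hj : j < (statesOf l h).length, j ≤ k → (statesOf l h).get ⟨j, hj⟩ ∈ T₁)

/-- `Pr_l^α(coBüchi(T))`: probability that from some point on all states of
the play lie in `T`. -/
noncomputable def coBuchiProb (M : POMDP L A O) [Fintype L] [Fintype A]
    (α : Strategy L A) (l : L) (T : Set L) : ℝ≥0∞ :=
  ⨆ k, ⨅ n, M.horizonProb α l n (fun h =>
    ∀ j, ∀ hj : j < (statesOf l h).length, k ≤ j → (statesOf l h).get ⟨j, hj⟩ ∈ T)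

/-- `Pr_l^α(Büchi(T))`: probability that the play visits `T` infinitely often. -/
noncomputable def buchiProb (M : POMDP L A O) [Fintype L] [Fintype A]
    (α : Strategy L A) (l : L) (T : Set L) : ℝ≥0∞ :=
  ⨅ k, ⨆ n, M.horizonProb α l n (fun h =>
    ∃ j, ∃ hj : j < (statesOf l h).length, k ≤ j ∧ (statesOf l h).get ⟨j, hj⟩ ∈ T)

/-- A strategy is observation-based if it plays the same distribution after any
two prefixes with the same sequences of observations and of actions. -/
def ObservationBased (M : POMDP L A O) (α : Strategy L A) : Prop :=
  ∀ l l' (h h' : List (A × L)), M.obs l = M.obs l' →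
    h.map Prod.fst = h'.map Prod.fst →
    h.map (fun p => M.obs p.2) = h'.map (fun p => M.obs p.2) →
    α l h = α l' h'

/-- A strategy is pure if it always plays a Dirac distribution. -/
def PureStrategy (α : Strategy L A) : Prop := ∀ l h, ∃ a, α l h = PMF.pure a

/-- Edge of the underlying graph of the POMDP. -/
def Edge (M : POMDP L A O) (l l' : L) : Prop := ∃ a, 0 < M.δ l a l'

/-- Reachability in the underlying graph of the POMDP. -/
def ReachableFrom (M : POMDP L A O) (l l' : L) : Prop :=
  Relation.ReflTransGen M.Edge l l'

/-- The memory state reached by a memory-update function `u` (together with the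
current state) after running through a prefix. -/
def memRun (M : POMDP L A O) {Mem : Type} (u : Mem → O → A → Mem) :
    Mem → L → List (A × L) → Mem × L
  | m, l, [] => (m, l)
  | m, l, (a, l') :: h => M.memRun u (u m (M.obs l) a) l' h

/-- The (observation-based) strategy induced by a finite-memory machine given by
memory-update function `u`, next-action function `next` and initial memory `m0`. -/
def fmStrategy (M : POMDP L A O) {Mem : Type} (u : Mem → O → A → Mem)
    (next : Mem → O → PMF A) (m0 : Mem) : Strategy L A :=
  fun l h =>
    let p := M.memRun u m0 l h
    next p.1 (M.obs p.2)

/-- The distribution choosing `x` and `y` with probability 1/2 each. -/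
noncomputable def half (x y : L) : PMF L :=
  (PMF.uniformOfFintype Bool).map (fun b => if b then x else y)


section Lemmas

variable (M : POMDP L A O)

lemma prefProbAux_nil (π : List (A × L) → PMF A) (l : L) :
    M.prefProbAux π l [] = 1 := rfl

lemma prefProbAux_cons (π : List (A × L) → PMF A) (l : L) (a : A) (l' : L)
    (h : List (A × L)) :
    M.prefProbAux π l ((a, l') :: h) =
      π [] a * M.δ l a l' * M.prefProbAux (fun h' => π ((a, l') :: h')) l' h := rfl

lemma prefProbAux_le_one :
    ∀ (h : List (A × L)) (π : List (A × L) → PMF A) (l : L),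
      M.prefProbAux π l h ≤ 1
  | [], _, _ => le_refl 1
  | (a, l') :: h, π, l => by
      rw [prefProbAux_cons]
      exact mul_le_one' (mul_le_one' (PMF.coe_le_one _ _) (PMF.coe_le_one _ _))
        (prefProbAux_le_one h _ _)

lemma pmf_sum_eq_one {X : Type} [Fintype X] (p : PMF X) : ∑ x : X, p x = 1 := by
  have := p.tsum_coe
  rwa [tsum_fintype] at this

variable [Fintype L] [Fintype A]

lemma sum_prefProbAux_ofFn :
    ∀ (k : ℕ) (π : List (A × L) → PMF A) (l : L),
      ∑ f : Fin k → A × L, M.prefProbAux π l (List.ofFn f) = 1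
  | 0, π, l => by simp [prefProbAux]
  | k + 1, π, l => by
      rw [← Equiv.sum_comp (Fin.consEquiv (fun _ : Fin (k+1) => A × L)), Fintype.sum_prod_type]
      have : ∀ (x : A × L) (g : Fin k → A × L),
          M.prefProbAux π l (List.ofFn ((Fin.consEquiv (fun _ : Fin (k+1) => A × L)) (x, g)))
            = π [] x.1 * M.δ l x.1 x.2 *
              M.prefProbAux (fun h' => π ((x.1, x.2) :: h')) x.2 (List.ofFn g) := by
        rintro ⟨a, l'⟩ g
        rw [List.ofFn_succ]
        simp only [Fin.consEquiv_apply, Fin.cons_zero, Fin.cons_succ]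
        rw [prefProbAux_cons]
      simp_rw [this]
      have : ∀ x : A × L,
          ∑ g : Fin k → A × L, π [] x.1 * M.δ l x.1 x.2 *
            M.prefProbAux (fun h' => π ((x.1, x.2) :: h')) x.2 (List.ofFn g)
          = π [] x.1 * M.δ l x.1 x.2 := by
        intro x
        rw [← Finset.mul_sum, sum_prefProbAux_ofFn k _ x.2, mul_one]
      simp_rw [this]
      rw [Fintype.sum_prod_type]
      simp_rw [← Finset.mul_sum, pmf_sum_eq_one, mul_one]
      exact pmf_sum_eq_one (π [])

lemma sum_prefProbAux_append :
    ∀ (h : List (A × L)) (π : List (A × L) → PMF A) (l : L) (k : ℕ),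
      ∑ g : Fin k → A × L, M.prefProbAux π l (h ++ List.ofFn g) = M.prefProbAux π l h
  | [], π, l, k => by simpa [prefProbAux_nil] using M.sum_prefProbAux_ofFn k π l
  | (a, l') :: h, π, l, k => by
      simp_rw [List.cons_append, prefProbAux_cons, ← Finset.mul_sum]
      rw [sum_prefProbAux_append h _ l' k]

lemma prefProbAux_append_le :
    ∀ (h₁ : List (A × L)) (π : List (A × L) → PMF A) (l : L) (h₂ : List (A × L)),
      M.prefProbAux π l (h₁ ++ h₂) ≤ M.prefProbAux π l h₁
  | [], π, l, h₂ => M.prefProbAux_le_one h₂ π l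
  | (a, l') :: h, π, l, h₂ => by
      rw [List.cons_append, prefProbAux_cons, prefProbAux_cons]
      exact mul_le_mul_right (prefProbAux_append_le h _ l' h₂) _

lemma chain_of_prefProbAux_pos :
    ∀ (h : List (A × L)) (π : List (A × L) → PMF A) (l : L),
      0 < M.prefProbAux π l h → List.Chain M.Edge l (h.map Prod.snd)
  | [], _, _, _ => List.Chain.nil
  | (a, l') :: h, π, l, hpos => by
      rw [prefProbAux_cons, pos_iff_ne_zero, mul_ne_zero_iff, mul_ne_zero_iff] at hpos
      exact List.Chain.cons ⟨a, pos_iff_ne_zero.2 hpos.1.2⟩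
        (chain_of_prefProbAux_pos h _ l' (pos_iff_ne_zero.2 hpos.2))

end Lemmas

section Lemmas2

variable (M : POMDP L A O) [Fintype L] [Fintype A]

lemma horizonProb_reach_le (α : Strategy L A) (l : L) (T : Set L)
    (h : List (A × L)) (k : ℕ)
    (hav : ∀ g : Fin k → A × L, 0 < M.prefProb α l (h ++ List.ofFn g) →
      ∀ s ∈ statesOf l (h ++ List.ofFn g), s ∉ T) :
    M.horizonProb α l (h.length + k) (fun g => ∃ s ∈ statesOf l g, s ∈ T) ≤
      1 - M.prefProb α l h := by
  classical
  set m := h.length + k with hm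
  set S : Set (Fin m → A × L) :=
    {g : Fin m → A × L | ∃ s ∈ statesOf l (List.ofFn g), s ∈ T} with hSdef
  set F : (Fin m → A × L) → ℝ≥0∞ := fun f => M.prefProb α l (List.ofFn f) with hF
  let emb : (Fin k → A × L) → (Fin m → A × L) := fun g =>
    Fin.append (fun j : Fin h.length => h.get j) g
  have hofn : ∀ g, List.ofFn (emb g) = h ++ List.ofFn g := by
    intro g
    show List.ofFn (Fin.append _ g) = _
    rw [List.ofFn_fin_append, List.ofFn_get]
  have hinj : Function.Injective emb := by
    intro g g' hg
    have := congrArg List.ofFn hg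
    rw [hofn, hofn] at this
    exact (List.ofFn_inj.mp (List.append_cancel_left this))
  have total : ∑ f : Fin m → A × L, F f = 1 := M.sum_prefProbAux_ofFn m (α l) l
  have himg : ∑ f ∈ Finset.univ.image emb, F f = M.prefProb α l h := by
    rw [Finset.sum_image (fun x _ y _ hxy => hinj hxy)]
    calc ∑ g : Fin k → A × L, F (emb g)
        = ∑ g : Fin k → A × L, M.prefProbAux (α l) l (h ++ List.ofFn g) := by
          apply Finset.sum_congr rfl; intro g _; rw [hF]; simp only [hofn]; rfl
      _ = M.prefProb α l h := M.sum_prefProbAux_append h (α l) l k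
  have hS : ∀ f ∈ Finset.univ.image emb, Set.indicator S F f = 0 := by
    intro f hf
    obtain ⟨g, _, rfl⟩ := Finset.mem_image.mp hf
    rcases eq_or_lt_of_le (zero_le (a := F (emb g))) with hz | hpos
    · rcases Set.indicator_eq_zero_or_self S F (emb g) with h0 | h0 <;> rw [h0]
      exact hz.symm
    · apply Set.indicator_of_notMem
      intro hmem
      rw [hSdef] at hmem
      obtain ⟨s, hs1, hs2⟩ := hmem
      rw [hofn] at hs1
      have hpos' : 0 < M.prefProb α l (h ++ List.ofFn g) := by
        rw [← hofn g]; exact hpos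
      exact hav g hpos' s hs1 hs2
  have h1 : ∑ f : Fin m → A × L, Set.indicator S F f ≤
      ∑ f ∈ (Finset.univ.image emb)ᶜ, F f := by
    rw [← Finset.sum_add_sum_compl (Finset.univ.image emb) (Set.indicator S F),
      Finset.sum_eq_zero hS, zero_add]
    exact Finset.sum_le_sum (fun f _ => Set.indicator_apply_le (fun _ => le_rfl))
  have h2 : ∑ f : Fin m → A × L, Set.indicator S F f + M.prefProb α l h ≤ 1 := by
    calc ∑ f : Fin m → A × L, Set.indicator S F f + M.prefProb α l h
        ≤ ∑ f ∈ (Finset.univ.image emb)ᶜ, F f + ∑ f ∈ Finset.univ.image emb, F f := by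
          exact add_le_add h1 himg.ge
      _ = ∑ f : Fin m → A × L, F f := by
          rw [add_comm, Finset.sum_add_sum_compl]
      _ = 1 := total
  have hfin : M.prefProb α l h ≠ ∞ :=
    ne_top_of_le_ne_top ENNReal.one_ne_top (M.prefProbAux_le_one h (α l) l)
  exact ENNReal.le_sub_of_add_le_right hfin h2

lemma false_of_trap (α : Strategy L A) (l : L) (T : Set L) (h : List (A × L))
    (hreach : M.reachProb α l T = 1)
    (hpos : 0 < M.prefProb α l h)
    (Hext : ∀ g : List (A × L), 0 < M.prefProb α l (h ++ g) →
      ∀ s ∈ statesOf l (h ++ g), s ∉ T) : False := by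
  classical
  have hle1 : M.prefProb α l h ≤ 1 := M.prefProbAux_le_one h (α l) l
  have h1m : 1 - M.prefProb α l h < 1 :=
    ENNReal.sub_lt_self ENNReal.one_ne_top one_ne_zero hpos.ne'
  have h1m' : 1 - M.prefProb α l h < M.reachProb α l T := hreach ▸ h1m
  rw [reachProb, lt_iSup_iff] at h1m'
  obtain ⟨m, hm⟩ := h1m'
  rcases le_or_gt h.length m with hlen | hlen
  · obtain ⟨k, rfl⟩ := Nat.exists_eq_add_of_le hlen
    have := M.horizonProb_reach_le α l T h k (fun g hg => Hext (List.ofFn g) hg)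
    exact absurd hm (not_lt.mpr this)
  · set h' := h.take m with hh'
    have hlen' : h'.length = m := by
      rw [hh', List.length_take]; omega
    have hsplit : h' ++ h.drop m = h := List.take_append_drop m h
    have hle' : M.prefProb α l h ≤ M.prefProb α l h' := by
      conv_lhs => rw [← hsplit]
      exact M.prefProbAux_append_le h' (α l) l (h.drop m)
    have hav : ∀ g : Fin 0 → A × L, 0 < M.prefProb α l (h' ++ List.ofFn g) →
        ∀ s ∈ statesOf l (h' ++ List.ofFn g), s ∉ T := by
      intro g _ s hs
      have hg : List.ofFn g = [] := List.ofFn_zero (f := g)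
      rw [hg, List.append_nil] at hs
      have hsub : s ∈ statesOf l h := by
        rw [statesOf] at hs ⊢
        rcases List.mem_cons.mp hs with hs | hs
        · exact hs ▸ List.mem_cons_self
        · refine List.mem_cons.mpr (Or.inr ?_)
          rw [hh', List.map_take] at hs
          exact (List.take_sublist m (h.map Prod.snd)).subset hs
      have := Hext [] (by rwa [List.append_nil]) s
      rw [List.append_nil] at this
      exact this hsub
    have hb := M.horizonProb_reach_le α l T h' 0 hav
    rw [hlen', Nat.add_zero] at hb
    have : M.horizonProb α l m (fun g => ∃ s ∈ statesOf l g, s ∈ T) ≤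
        1 - M.prefProb α l h :=
      le_trans hb (tsub_le_tsub_left hle' 1)
    exact absurd hm (not_lt.mpr this)

lemma exists_prefProb_lt (α : Strategy L A) (l : L) (T : Set L)
    (hreach : M.reachProb α l T = 1)
    (fam : ℕ → List (A × L)) (hlen : ∀ m, (fam m).length = m)
    (havoid : ∀ m, ∀ s ∈ statesOf l (fam m), s ∉ T)
    (ε : ℝ≥0∞) (hε : 0 < ε) : ∃ m, M.prefProb α l (fam m) < ε := by
  classical
  by_contra hcon
  push_neg at hcon
  have hb : ∀ m, M.horizonProb α l m (fun g => ∃ s ∈ statesOf l g, s ∈ T) ≤ 1 - ε := by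
    intro m
    have hav : ∀ g : Fin 0 → A × L, 0 < M.prefProb α l (fam m ++ List.ofFn g) →
        ∀ s ∈ statesOf l (fam m ++ List.ofFn g), s ∉ T := by
      intro g _ s hs
      have hg : List.ofFn g = [] := List.ofFn_zero (f := g)
      rw [hg, List.append_nil] at hs
      exact havoid m s hs
    have := M.horizonProb_reach_le α l T (fam m) 0 hav
    rw [hlen m, Nat.add_zero] at this
    exact le_trans this (tsub_le_tsub_left (hcon m) 1)
  have : M.reachProb α l T ≤ 1 - ε := iSup_le hb
  rw [hreach] at this
  have hlt : 1 - ε < 1 := ENNReal.sub_lt_self ENNReal.one_ne_top one_ne_zero hε.ne'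
  exact absurd (lt_of_le_of_lt this hlt) (lt_irrefl 1)

lemma prefProb_fm_cons {Mem : Type} (u : Mem → O → A → Mem)
    (next : Mem → O → PMF A) (m0 : Mem) (l : L) (a : A) (l' : L)
    (h : List (A × L)) :
    M.prefProb (M.fmStrategy u next m0) l ((a, l') :: h) =
      next m0 (M.obs l) a * M.δ l a l' *
        M.prefProb (M.fmStrategy u next (u m0 (M.obs l) a)) l' h := by
  rw [prefProb, prefProbAux_cons]
  have h1 : (M.fmStrategy u next m0) l [] a = next m0 (M.obs l) a := rfl
  have h2 : (fun h' => (M.fmStrategy u next m0) l ((a, l') :: h')) =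
      (M.fmStrategy u next (u m0 (M.obs l) a)) l' := by
    funext h'
    simp [fmStrategy, memRun]
  rw [h1, h2]
  rfl

lemma prefProb_nil (α : Strategy L A) (l : L) : M.prefProb α l [] = 1 := rfl

end Lemmas2
end POMDP

/-- The state space of the POMDP `P'_n`: for each `1 ≤ i ≤ n` a loop of `p_i`
states `q_1^i, …, q_{p_i}^i` where `p_i` is the `i`-th prime number (encoded as
`Sum.inl ⟨i, j⟩` with `j : Fin p_i` standing for `q_{j+1}^i`), together with the
initial state `q_0 = Sum.inr 0` and the absorbing states `Goal = Sum.inr 1` and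
`Sink = Sum.inr 2`. -/
abbrev Pn'State (n : ℕ) : Type :=
  (Σ i : Fin n, Fin (Nat.nth Nat.Prime i.val)) ⊕ Fin 3

/-- `p*_n = p_1 ⋯ p_n`, the product of the first `n` primes. -/
noncomputable def pstar (n : ℕ) : ℕ := ∏ i : Fin n, Nat.nth Nat.Prime i.val

/-- The POMDP `P'_n`, with actions `tick = true` and `# = false`. From `q_0`,
every action goes to `q_1^i` with probability `1/n` for each `i`. From `q_j^i`
with `j < p_i`, `tick` goes to `q_{j+1}^i` and `#` goes to `Sink`; from
`q_{p_i}^i`, `tick` goes to `q_1^i` and `#` goes to `Goal`. `Goal` and `Sink`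
are absorbing. There is a single observation (`Unit`) containing all states. -/
noncomputable def Pn'M (n : ℕ) [NeZero n] : POMDP (Pn'State n) Bool Unit where
  δ := fun s act =>
    match s with
    | Sum.inr k =>
        if k = 0 then
          (PMF.uniformOfFintype (Fin n)).map
            (fun i => Sum.inl ⟨i, ⟨0, (Nat.prime_nth_prime i.val).pos⟩⟩)
        else PMF.pure (Sum.inr k)
    | Sum.inl ⟨i, j⟩ =>
        if hlt : j.val + 1 < Nat.nth Nat.Prime i.val then
          if act then PMF.pure (Sum.inl ⟨i, ⟨j.val + 1, hlt⟩⟩)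
          else PMF.pure (Sum.inr 2)
        else
          if act then PMF.pure (Sum.inl ⟨i, ⟨0, (Nat.prime_nth_prime i.val).pos⟩⟩)
          else PMF.pure (Sum.inr 1)
  obs := fun _ => ()

namespace PnAux

open POMDP

variable (n : ℕ) [NeZero n]

/-- The loop state of component `i` reached after `s` ticks past the entry. -/
noncomputable def q (i : Fin n) (s : ℕ) : Pn'State n :=
  Sum.inl ⟨i, ⟨s % Nat.nth Nat.Prime i.val,
    Nat.mod_lt s (Nat.prime_nth_prime i.val).pos⟩⟩

lemma succ_mod (p : ℕ) (hp : 1 < p) (s : ℕ) :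
    (s + 1) % p = if s % p + 1 < p then s % p + 1 else 0 := by
  have h1 : (s + 1) % p = (s % p + 1) % p := by
    rw [Nat.add_mod, Nat.mod_eq_of_lt hp]
  split
  · rw [h1, Nat.mod_eq_of_lt ‹_›]
  · have hlt := Nat.mod_lt s (show 0 < p by omega)
    have : s % p + 1 = p := by omega
    rw [h1, this, Nat.mod_self]

lemma delta_tick (i : Fin n) (s : ℕ) :
    (Pn'M n).δ (q n i s) true (q n i (s + 1)) = 1 := by
  have hp := Nat.prime_nth_prime i.val
  have hmod := succ_mod (Nat.nth Nat.Prime i.val) hp.one_lt s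
  rw [q, q, Pn'M]
  dsimp only
  rcases Nat.lt_or_ge (s % Nat.nth Nat.Prime i.val + 1) (Nat.nth Nat.Prime i.val)
    with hlt | hge
  · rw [dif_pos hlt, if_pos rfl]
    have hY : (Sum.inl ⟨i, ⟨(s + 1) % Nat.nth Nat.Prime i.val,
          Nat.mod_lt (s + 1) hp.pos⟩⟩ : Pn'State n) =
        Sum.inl ⟨i, ⟨s % Nat.nth Nat.Prime i.val + 1, hlt⟩⟩ :=
      congrArg Sum.inl (congrArg (Sigma.mk i)
        (Fin.ext (show (s + 1) % Nat.nth Nat.Prime i.val =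
          s % Nat.nth Nat.Prime i.val + 1 by rw [hmod, if_pos hlt])))
    rw [hY, PMF.pure_apply, if_pos rfl]
  · rw [dif_neg (not_lt.mpr hge), if_pos rfl]
    have hY : (Sum.inl ⟨i, ⟨(s + 1) % Nat.nth Nat.Prime i.val,
          Nat.mod_lt (s + 1) hp.pos⟩⟩ : Pn'State n) =
        Sum.inl ⟨i, ⟨0, hp.pos⟩⟩ :=
      congrArg Sum.inl (congrArg (Sigma.mk i)
        (Fin.ext (show (s + 1) % Nat.nth Nat.Prime i.val = 0 by
          rw [hmod, if_neg (not_lt.mpr hge)])))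
    rw [hY, PMF.pure_apply, if_pos rfl]

lemma delta_sharp (i : Fin n) (s : ℕ)
    (hnd : ¬ Nat.nth Nat.Prime i.val ∣ (s + 1)) :
    (Pn'M n).δ (q n i s) false (Sum.inr 2) = 1 := by
  have hp := Nat.prime_nth_prime i.val
  have hmod := Nat.mod_lt s hp.pos
  have hlt : s % Nat.nth Nat.Prime i.val + 1 < Nat.nth Nat.Prime i.val := by
    rcases Nat.lt_or_ge (s % Nat.nth Nat.Prime i.val + 1) (Nat.nth Nat.Prime i.val)
      with h | h
    · exact h
    · exfalso
      have heq : s % Nat.nth Nat.Prime i.val + 1 = Nat.nth Nat.Prime i.val := by omega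
      apply hnd
      have : (s + 1) % Nat.nth Nat.Prime i.val = 0 := by
        rw [succ_mod _ hp.one_lt, if_neg (by omega)]
      exact Nat.dvd_of_mod_eq_zero this
  rw [q, Pn'M]
  dsimp only
  rw [dif_pos hlt, if_neg (Bool.false_ne_true), PMF.pure_apply, if_pos rfl]

lemma delta_init_pos (b : Bool) (i : Fin n) :
    0 < (Pn'M n).δ (Sum.inr 0) b (q n i 0) := by
  have hp := Nat.prime_nth_prime i.val
  rw [q, Pn'M]
  dsimp only
  rw [if_pos rfl]
  rw [pos_iff_ne_zero, ← PMF.mem_support_iff, PMF.support_map]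
  refine ⟨i, ?_, ?_⟩
  · rw [PMF.mem_support_iff, PMF.uniformOfFintype_apply]
    simp
  · exact congrArg Sum.inl (congrArg (Sigma.mk i) (Fin.ext (Nat.zero_mod _).symm))

lemma sink_absorb (a : Bool) (x : Pn'State n)
    (h : 0 < (Pn'M n).δ (Sum.inr 2) a x) : x = Sum.inr 2 := by
  rw [Pn'M] at h
  dsimp only at h
  rw [if_neg (by decide)] at h
  rw [pos_iff_ne_zero, ← PMF.mem_support_iff, PMF.support_pure] at h
  exact h

lemma sink_chain : ∀ (lst : List (Pn'State n)),
    List.Chain (Pn'M n).Edge (Sum.inr 2) lst → ∀ x ∈ lst, x = Sum.inr 2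
  | [], _, x, hx => absurd hx (List.not_mem_nil)
  | y :: lst, h, x, hx => by
      obtain ⟨hE, hc⟩ := List.chain_cons.mp h
      obtain ⟨a, ha⟩ := hE
      have hy : y = Sum.inr 2 := sink_absorb n a y ha
      subst hy
      rcases List.mem_cons.mp hx with rfl | hx
      · rfl
      · exact sink_chain lst hc x hx

/-- The tick history in component `i` beginning `s` ticks after the entry. -/
noncomputable def tickList (i : Fin n) (s t : ℕ) : List (Bool × Pn'State n) :=
  (List.range t).map (fun j => (true, q n i (s + 1 + j)))

lemma tickList_length (i : Fin n) (s t : ℕ) : (tickList n i s t).length = t := by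
  rw [tickList, List.length_map, List.length_range]

lemma tickList_succ (i : Fin n) (s t : ℕ) :
    tickList n i s (t + 1) = (true, q n i (s + 1)) :: tickList n i (s + 1) t := by
  rw [tickList, List.range_succ_eq_map, List.map_cons, List.map_map, tickList]
  congr 1
  apply List.map_congr_left
  intro j _
  simp only [Function.comp_apply]
  congr 2
  omega

variable {Mem : Type} (u : Mem → Unit → Bool → Mem)

/-- Iterated tick-update of the memory. -/
def tIter (m : Mem) (t : ℕ) : Mem := (fun x => u x () true)^[t] m

lemma tIter_zero (m : Mem) : tIter u m 0 = m := rfl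

lemma tIter_shift (m : Mem) (j : ℕ) :
    tIter u (u m () true) j = tIter u m (j + 1) := by
  rw [tIter, tIter, Function.iterate_succ_apply]

lemma tIter_succ (m : Mem) (j : ℕ) :
    tIter u m (j + 1) = u (tIter u m j) () true := by
  rw [tIter, tIter, Function.iterate_succ_apply']

variable (next : Mem → Unit → PMF Bool)

lemma pref_tick (i : Fin n) (t : ℕ) :
    ∀ (s : ℕ) (m : Mem) (e : List (Bool × Pn'State n)),
      (Pn'M n).prefProb ((Pn'M n).fmStrategy u next m) (q n i s)
          (tickList n i s t ++ e)
        = (∏ j ∈ Finset.range t, next (tIter u m j) () true) *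
          (Pn'M n).prefProb ((Pn'M n).fmStrategy u next (tIter u m t))
            (q n i (s + t)) e := by
  induction t with
  | zero =>
      intro s m e
      simp [tickList, tIter_zero]
  | succ t ih =>
      intro s m e
      rw [tickList_succ, List.cons_append, POMDP.prefProb_fm_cons,
        ih (s + 1) (u m () true) e]
      have hobs : (Pn'M n).obs (q n i s) = () := rfl
      rw [hobs, delta_tick, mul_one]
      simp_rw [tIter_shift u m]
      have hs : s + 1 + t = s + (t + 1) := by omega
      rw [hs]
      rw [Finset.prod_range_succ']
      rw [tIter_zero]
      ring

end PnAux


/-- For every `n ≥ 1`, in the POMDP `P'_n` with the reachability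
objective `Reach({Goal})`, every finite-memory randomized (observation-based)
strategy that is almost-sure winning from `q_0` has memory of size at least
`p*_n = p_1 ⋯ p_n`; in particular `p*_n ≥ 2^n`, while `P'_n` has
`3 + (p_1 + ⋯ + p_n)` states. -/
theorem pn'_almost_sure_reach_memory_lower_bound (n : ℕ) [NeZero n] :
    (∀ (Mem : Type) (iM : Fintype Mem) (m0 : Mem)
        (u : Mem → Unit → Bool → Mem)
        (next : Mem → Unit → PMF Bool),
        (Pn'M n).reachProb ((Pn'M n).fmStrategy u next m0)
            (Sum.inr 0) {(Sum.inr 1 : Pn'State n)} = 1 →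
        pstar n ≤ @Fintype.card Mem iM) ∧
    2 ^ n ≤ pstar n ∧
    Fintype.card (Pn'State n) = 3 + ∑ i : Fin n, Nat.nth Nat.Prime i.val := by
  classical
  refine ⟨?_, ?_, ?_⟩
  · -- main memory lower bound
    intro Mem iM m0 u next hreach
    by_contra hcard
    push_neg at hcard
    set α := (Pn'M n).fmStrategy u next m0 with hα
    obtain ⟨b, hbmem⟩ := (next m0 ()).support_nonempty
    have hb : next m0 () b ≠ 0 := (PMF.mem_support_iff _ _).mp hbmem
    set μ : ℕ → Mem := fun t => PnAux.tIter u (u m0 () b) t with hμ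
    set γ : ℕ → ℝ≥0∞ := fun t => next (μ t) () true with hγ
    set Γ : ℕ → ℝ≥0∞ := fun t => ∏ j ∈ Finset.range t, γ j with hΓ
    have hμsucc : ∀ t, μ (t + 1) = u (μ t) () true := fun t => PnAux.tIter_succ u _ t
    have hΓ0 : Γ 0 = 1 := by simp [hΓ]
    have hΓsucc : ∀ t, Γ (t + 1) = Γ t * γ t := fun t => Finset.prod_range_succ γ t
    have hγle : ∀ t, γ t ≤ 1 := fun t => PMF.coe_le_one _ _
    have hΓanti : ∀ s t, s ≤ t → Γ t ≤ Γ s := by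
      intro s t hst
      induction t, hst using Nat.le_induction with
      | base => exact le_rfl
      | succ t hst ih =>
          rw [hΓsucc]
          exact le_trans (mul_le_of_le_one_right' (hγle t)) ih
    have hval : ∀ p : PMF Bool, p true + p false = 1 := by
      intro p
      have := POMDP.pmf_sum_eq_one p
      rwa [Fintype.sum_bool] at this
    have hδ0 : ∀ i : Fin n, 0 < (Pn'M n).δ (Sum.inr 0) b (PnAux.q n i 0) :=
      PnAux.delta_init_pos n b
    -- prefix probability of the tick histories
    have hpref : ∀ (i : Fin n) (t : ℕ) (e : List (Bool × Pn'State n)),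
        (Pn'M n).prefProb α (Sum.inr 0)
            ((b, PnAux.q n i 0) :: (PnAux.tickList n i 0 t ++ e))
          = next m0 () b * (Pn'M n).δ (Sum.inr 0) b (PnAux.q n i 0) *
            (Γ t * (Pn'M n).prefProb ((Pn'M n).fmStrategy u next (μ t))
              (PnAux.q n i t) e) := by
      intro i t e
      rw [hα, POMDP.prefProb_fm_cons, PnAux.pref_tick n u next i t 0 (u m0 () b) e]
      rw [show (0 : ℕ) + t = t from Nat.zero_add t]
    -- histories avoid the goal
    have havoid : ∀ (i : Fin n) (t : ℕ),
        ∀ s ∈ POMDP.statesOf (Sum.inr 0 : Pn'State n)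
          ((b, PnAux.q n i 0) :: PnAux.tickList n i 0 t),
          s ∉ ({Sum.inr 1} : Set (Pn'State n)) := by
      intro i t s hs hsT
      rw [Set.mem_singleton_iff] at hsT
      subst hsT
      rw [POMDP.statesOf] at hs
      rcases List.mem_cons.mp hs with h | h
      · exact absurd (Sum.inr_injective h) (by decide)
      · rw [List.map_cons] at h
        rcases List.mem_cons.mp h with h | h
        · simp [PnAux.q] at h
        · obtain ⟨x, hx1, hx2⟩ := List.mem_map.mp h
          rw [PnAux.tickList] at hx1
          obtain ⟨j, _, rfl⟩ := List.mem_map.mp hx1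
          simp [PnAux.q] at hx2
    -- Claim 1 : # can only be played at multiples of pstar
    have hgood : ∀ t : ℕ, Γ t ≠ 0 → next (μ t) () false ≠ 0 → pstar n ∣ (t + 1) := by
      intro t hΓt hsharp
      have hdvd : ∀ i : Fin n, Nat.nth Nat.Prime i.val ∣ (t + 1) := by
        intro i
        by_contra hnd
        set Hbad : List (Bool × Pn'State n) :=
          (b, PnAux.q n i 0) :: (PnAux.tickList n i 0 t ++ [(false, Sum.inr 2)])
          with hHbad
        have hp1 : (Pn'M n).prefProb α (Sum.inr 0) Hbad
            = next m0 () b * (Pn'M n).δ (Sum.inr 0) b (PnAux.q n i 0) *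
              (Γ t * (next (μ t) () false * 1 * 1)) := by
          rw [hHbad, hpref i t [(false, Sum.inr 2)], POMDP.prefProb_fm_cons]
          rw [show (Pn'M n).δ (PnAux.q n i t) false (Sum.inr 2) = 1 from
            PnAux.delta_sharp n i t hnd]
          rfl
        have hpos : 0 < (Pn'M n).prefProb α (Sum.inr 0) Hbad := by
          rw [hp1, mul_one, mul_one, pos_iff_ne_zero]
          exact mul_ne_zero (mul_ne_zero hb (hδ0 i).ne')
            (mul_ne_zero hΓt hsharp)
        apply POMDP.false_of_trap (Pn'M n) α (Sum.inr 0) {Sum.inr 1} Hbad hreach hpos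
        intro g hg s' hs' hsT
        rw [Set.mem_singleton_iff] at hsT
        subst hsT
        have hchain := POMDP.chain_of_prefProbAux_pos (Pn'M n) (Hbad ++ g)
          (α (Sum.inr 0)) (Sum.inr 0) hg
        have hmap : (Hbad ++ g).map Prod.snd
            = (PnAux.q n i 0 :: (PnAux.tickList n i 0 t).map Prod.snd) ++
              ((Sum.inr 2 : Pn'State n) :: g.map Prod.snd) := by
          rw [hHbad]
          simp [List.map_append]
        have hsink := (List.isChain_cons_split.mp (hmap ▸ hchain)).2
        have hgs : ∀ x ∈ g.map Prod.snd, x = Sum.inr 2 := PnAux.sink_chain n _ hsink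
        rw [POMDP.statesOf, hmap] at hs'
        rcases List.mem_cons.mp hs' with h | h
        · exact absurd (Sum.inr_injective h) (by decide)
        · rcases List.mem_append.mp h with h | h
          · rcases List.mem_cons.mp h with h | h
            · simp [PnAux.q] at h
            · obtain ⟨x, hx1, hx2⟩ := List.mem_map.mp h
              rw [PnAux.tickList] at hx1
              obtain ⟨j, _, rfl⟩ := List.mem_map.mp hx1
              simp [PnAux.q] at hx2
          · rcases List.mem_cons.mp h with h | h
            · exact absurd (Sum.inr_injective h) (by decide)
            · exact absurd (Sum.inr_injective (hgs _ h)) (by decide)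
      -- combine the divisibilities
      rw [pstar]
      have hinj : ∀ x ∈ Finset.univ, ∀ y ∈ Finset.univ,
          (fun i : Fin n => Nat.nth Nat.Prime i.val) x =
          (fun i : Fin n => Nat.nth Nat.Prime i.val) y → x = y := by
        intro x _ y _ hxy
        exact Fin.ext (Nat.nth_injective Nat.infinite_setOf_prime hxy)
      have himg : ∏ p ∈ Finset.univ.image (fun i : Fin n => Nat.nth Nat.Prime i.val), p
          = ∏ i : Fin n, Nat.nth Nat.Prime i.val := Finset.prod_image hinj
      rw [← himg]
      apply Finset.prod_primes_dvd
      · intro p hp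
        obtain ⟨i, _, rfl⟩ := Finset.mem_image.mp hp
        exact (Nat.prime_nth_prime i.val).prime
      · intro p hp
        obtain ⟨i, _, rfl⟩ := Finset.mem_image.mp hp
        exact hdvd i
    -- Claim 2 : the all-tick probability tends to 0
    have hmass : ∀ ε : ℝ≥0∞, 0 < ε → ∃ t, Γ t < ε := by
      intro ε hε
      rcases lt_or_ge 1 ε with hε1 | hε1
      · exact ⟨0, by rw [hΓ0]; exact hε1⟩
      have hn0 : 0 < n := Nat.pos_of_ne_zero (NeZero.ne n)
      set i0 : Fin n := ⟨0, hn0⟩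
      set c : ℝ≥0∞ := next m0 () b * (Pn'M n).δ (Sum.inr 0) b (PnAux.q n i0 0)
        with hc
      have hc0 : c ≠ 0 := mul_ne_zero hb (hδ0 i0).ne'
      have hcle : c ≤ 1 := mul_le_one' (PMF.coe_le_one _ _) (PMF.coe_le_one _ _)
      have hcfin : c ≠ ∞ := ne_top_of_le_ne_top ENNReal.one_ne_top hcle
      set fam : ℕ → List (Bool × Pn'State n) := fun m =>
        match m with
        | 0 => []
        | t + 1 => (b, PnAux.q n i0 0) :: PnAux.tickList n i0 0 t
        with hfam
      have hlen : ∀ m, (fam m).length = m := by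
        intro m
        match m with
        | 0 => rfl
        | t + 1 => simp [hfam, PnAux.tickList_length]
      have hav : ∀ m, ∀ s ∈ POMDP.statesOf (Sum.inr 0 : Pn'State n) (fam m),
          s ∉ ({Sum.inr 1} : Set (Pn'State n)) := by
        intro m
        match m with
        | 0 =>
            intro s hs hsT
            rw [Set.mem_singleton_iff] at hsT
            subst hsT
            rw [POMDP.statesOf] at hs
            rcases List.mem_cons.mp hs with h | h
            · exact absurd (Sum.inr_injective h) (by decide)
            · exact absurd h (List.not_mem_nil)
        | t + 1 => exact havoid i0 t
      obtain ⟨m, hm⟩ := POMDP.exists_prefProb_lt (Pn'M n) α (Sum.inr 0)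
        {Sum.inr 1} hreach fam hlen hav (c * ε)
        (pos_iff_ne_zero.2 (mul_ne_zero hc0 hε.ne'))
      match m, hm with
      | 0, hm =>
          exfalso
          rw [show fam 0 = [] from rfl, POMDP.prefProb_nil] at hm
          exact absurd hm (not_lt.mpr (le_trans (mul_le_one' hcle hε1) le_rfl))
      | t + 1, hm =>
          refine ⟨t, ?_⟩
          rw [show fam (t + 1) = (b, PnAux.q n i0 0) :: PnAux.tickList n i0 0 t
              from rfl, ← List.append_nil (PnAux.tickList n i0 0 t),
            hpref i0 t [], POMDP.prefProb_nil, mul_one] at hm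
          rw [← hc] at hm
          exact (ENNReal.mul_right_strictMono hc0 hcfin).lt_iff_lt.mp hm
    -- pigeonhole and periodicity
    set N := Fintype.card Mem with hN
    obtain ⟨x, y, hxy, hfeq⟩ := Fintype.exists_ne_map_eq_of_card_lt
      (fun j : Fin (N + 1) => μ j.val) (by simp [hN])
    have hne : (x : ℕ) ≠ y := fun h => hxy (Fin.ext h)
    obtain ⟨a, a', haa, ha'N, hμeq⟩ :
        ∃ a a' : ℕ, a < a' ∧ a' ≤ N ∧ μ a = μ a' := by
      rcases hne.lt_or_gt with h | h
      · exact ⟨x, y, h, by omega, hfeq⟩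
      · exact ⟨y, x, h, by omega, hfeq.symm⟩
    set d := a' - a with hdd
    have hd : 0 < d := by omega
    have hdN : d ≤ N := by omega
    have hper : ∀ k, μ (a + k + d) = μ (a + k) := by
      intro k
      induction k with
      | zero =>
          rw [show a + 0 + d = a' by omega, show a + 0 = a by omega]
          exact hμeq.symm
      | succ k ih =>
          rw [show a + (k + 1) + d = (a + k + d) + 1 by omega, hμsucc, ih,
            ← hμsucc, show a + k + 1 = a + (k + 1) by omega]
    have hperge : ∀ t, a ≤ t → μ (t + d) = μ t := by
      intro t ht
      obtain ⟨k, rfl⟩ := Nat.exists_eq_add_of_le ht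
      rw [show a + k + d = a + k + d by rfl]
      exact hper k
    have hpstar_pos : 0 < pstar n := by
      rw [pstar]
      exact Finset.prod_pos (fun i _ => (Nat.prime_nth_prime i.val).pos)
    by_cases hall : ∀ t, Γ t ≠ 0
    · -- no deterministic stopping : infinitely many # chances
      have hex : ∃ t, a ≤ t ∧ next (μ t) () false ≠ 0 := by
        by_contra hcon
        push_neg at hcon
        have hγ1 : ∀ t, a ≤ t → γ t = 1 := by
          intro t ht
          have hv := hval (next (μ t) ())
          rw [hcon t ht, add_zero] at hv
          exact hv
        have hconst : ∀ t, a ≤ t → Γ t = Γ a := by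
          intro t ht
          induction t, ht using Nat.le_induction with
          | base => rfl
          | succ t ht ih => rw [hΓsucc, hγ1 t ht, mul_one, ih]
        have hlow : ∀ t, Γ a ≤ Γ t := by
          intro t
          rcases le_or_gt a t with h | h
          · rw [hconst t h]
          · exact hΓanti t a h.le
        obtain ⟨t, ht⟩ := hmass (Γ a) (pos_iff_ne_zero.2 (hall a))
        exact absurd (hlow t) (not_le.mpr ht)
      obtain ⟨t1, ht1a, ht1s⟩ := hex
      have h1 := hgood t1 (hall t1) ht1s
      have h2 := hgood (t1 + d) (hall _) (by rw [hperge t1 ht1a]; exact ht1s)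
      have hdvd : pstar n ∣ d := by
        have := Nat.dvd_sub h2 h1
        rwa [show t1 + d + 1 - (t1 + 1) = d by omega] at this
      have := Nat.le_of_dvd hd hdvd
      omega
    · -- deterministic stopping time
      push_neg at hall
      have hex0 : ∃ t, Γ t = 0 := by
        obtain ⟨t, ht⟩ := hall
        exact ⟨t, by simpa using ht⟩
      have ht0 : Γ (Nat.find hex0) = 0 := Nat.find_spec hex0
      have ht0min : ∀ m, m < Nat.find hex0 → Γ m ≠ 0 := fun m hm =>
        Nat.find_min hex0 hm
      have ht00 : Nat.find hex0 ≠ 0 := by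
        intro h
        rw [h, hΓ0] at ht0
        exact one_ne_zero ht0
      obtain ⟨t0', ht0'⟩ : ∃ t0', Nat.find hex0 = t0' + 1 :=
        ⟨Nat.find hex0 - 1, by omega⟩
      rw [ht0'] at ht0 ht0min
      have hΓt0' : Γ t0' ≠ 0 := ht0min t0' (by omega)
      have hγ0 : γ t0' = 0 := by
        rw [hΓsucc] at ht0
        rcases mul_eq_zero.mp ht0 with h | h
        · exact absurd h hΓt0'
        · exact h
      have hsh : next (μ t0') () false ≠ 0 := by
        have hv := hval (next (μ t0') ())
        rw [show next (μ t0') () true = γ t0' from rfl, hγ0, zero_add] at hv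
        rw [hv]
        exact one_ne_zero
      have h1 := hgood t0' hΓt0' hsh
      have hpst : pstar n ≤ t0' + 1 := Nat.le_of_dvd (by omega) h1
      have ht3a : a + d ≤ t0' := by omega
      set t3 := t0' - d with ht3
      have hμ3 : μ t0' = μ t3 := by
        have := hperge t3 (by omega)
        rwa [show t3 + d = t0' by omega] at this
      have h2 := hgood t3 (ht0min t3 (by omega))
        (by rw [← hμ3]; exact hsh)
      have hdvd : pstar n ∣ d := by
        have := Nat.dvd_sub h1 h2
        rwa [show t0' + 1 - (t3 + 1) = d by omega] at this
      have := Nat.le_of_dvd hd hdvd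
      omega
  · -- 2 ^ n ≤ pstar n
    rw [pstar]
    calc (2 : ℕ) ^ n = ∏ _i : Fin n, 2 := by
          rw [Finset.prod_const, Finset.card_univ, Fintype.card_fin]
      _ ≤ ∏ i : Fin n, Nat.nth Nat.Prime i.val :=
          Finset.prod_le_prod' (fun i _ => (Nat.prime_nth_prime i.val).two_le)
  · -- number of states
    simp [Fintype.card_sum, Fintype.card_sigma, Fintype.card_fin]
    ring
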